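/- Let k ≥ 1 and d ≥ 1 be integers and let C_d be a set of classifiers on X_d. Suppose (P_{ε,δ})_{ε,δ ∈ 2^{−ℕ}} is a family of learning algorithms such that for all ε, δ ∈ 2^{−ℕ}, all integers m ≥ (d/(εδ))^k, and every probability measure D on X_d × Y consistent with C_d: Pr_{Z ∼ D^m}[ err_D(P_{ε,δ}(Z)) ≤ ε ] ≥ 1 − δ. Let B be the learning algorithm which, on a dataset Z of size m, outputs P_{r,r}(Z), where r is the largest element of 2^{−ℕ} with r ≤ m^{−1/(3k)}. Suppose that A is a learning algorithm, 𝒜 is a finite family of learning algorithms with B ∈ 𝒜, and k' ≥ 1 is such that for all ε, δ ∈ 2^{−ℕ}, all integers m ≥ 1, all probability measures D on X_d × Y, and all integers M ≥ (dm/(εδ))^{k'}: Pr_{Z ∼ D^m, Z' ∼ D^M}[ err_D(A(Z;Z')) ≤ min_{B' ∈ 𝒜} err_D(B'(Z)) + ε ] ≥ 1 − δ. Then for all ε, δ ∈ 2^{−ℕ}, all integers m ≥ (4d)^{3k} + (8/min(ε,δ)³)^k, all integers M ≥ (4dm/(εδ))^{k'}, and every probability measure D on X_d × Y consistent with C_d: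 Pr_{Z ∼ D^m, Z' ∼ D^M}[ err_D(A(Z;Z')) ≤ ε ] ≥ 1 − δ. -/

import Mathlib

open MeasureTheory

/-- The two-element label set `{-1, 1}`. -/
abbrev Sign : Type := ({-1, 1} : Set ℤ)

/-- A labeled example in dimension `d`: a point of `X_d = {-1,1}^d` with a label. -/
abbrev Example (d : ℕ) : Type := (Fin d → Sign) × Sign

/-- A binary classifier on `X_d = {-1,1}^d`. -/
abbrev Classifier (d : ℕ) : Type := (Fin d → Sign) → Sign

/-- A learning algorithm: maps finite datasets of labeled examples to classifiers. -/
abbrev Learner (d : ℕ) : Type := List (Example d) → Classifier d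

/-- The error of classifier `c` with respect to distribution `D` on `X_d × Y`. -/
noncomputable def errD {d : ℕ} (D : Measure (Example d)) (c : Classifier d) : ℝ :=
  (D {p | c p.1 ≠ p.2}).toReal

/-- `x` is of the form `2^{-i}` for some `i ∈ ℕ`. -/
def IsPow2Inv (x : ℝ) : Prop := ∃ i : ℕ, x = 2 ^ (-(i : ℤ))

lemma pow2inv_pos {x : ℝ} (h : IsPow2Inv x) : 0 < x := by
  obtain ⟨i, rfl⟩ := h; positivity

lemma pow2inv_le_one {x : ℝ} (h : IsPow2Inv x) : x ≤ 1 := by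
  obtain ⟨i, rfl⟩ := h
  exact zpow_le_one_of_nonpos₀ (by norm_num) (by simp)

lemma pow2inv_half {x : ℝ} (h : IsPow2Inv x) : IsPow2Inv (x / 2) := by
  obtain ⟨i, rfl⟩ := h
  refine ⟨i + 1, ?_⟩
  rw [show (-(((i : ℕ) + 1 : ℕ) : ℤ)) = (-(i : ℤ)) + (-1) by push_cast; ring,
    zpow_add₀ (two_ne_zero)]
  field_simp

lemma exists_pow2_half {x : ℝ} (hx0 : 0 < x) (hx1 : x ≤ 1) :
    ∃ q : ℝ, IsPow2Inv q ∧ q ≤ x ∧ x / 2 < q := by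
  have hex : ∃ i : ℕ, (2:ℝ) ^ (-(i:ℤ)) ≤ x := by
    obtain ⟨n, hn⟩ := exists_pow_lt_of_lt_one hx0 (by norm_num : (1/2:ℝ) < 1)
    refine ⟨n, le_of_lt ?_⟩
    have : (2:ℝ) ^ (-(n:ℤ)) = (1/2) ^ n := by
      rw [zpow_neg, zpow_natCast, one_div, inv_pow]
    rw [this]; exact hn
  have h1 : (2:ℝ) ^ (-(Nat.find hex : ℤ)) ≤ x := Nat.find_spec hex
  refine ⟨_, ⟨Nat.find hex, rfl⟩, h1, ?_⟩
  rcases h : Nat.find hex with _ | j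
  · norm_num; linarith
  · have hmin : ¬ ((2:ℝ) ^ (-(j:ℤ)) ≤ x) := Nat.find_min hex (by omega)
    push_neg at hmin
    have : (2:ℝ) ^ (-(j:ℤ)) = 2 * (2:ℝ) ^ (-((j+1:ℕ):ℤ)) := by
      rw [show (-((j+1:ℕ):ℤ)) = (-(j:ℤ)) + (-1) by push_cast; ring, zpow_add₀ two_ne_zero]
      field_simp
    rw [this] at hmin; push_cast at hmin ⊢; linarith

lemma rpow_root_le {c mr : ℝ} {n : ℕ} (hn : n ≠ 0) (hc : 0 ≤ c) (h : c ^ n ≤ mr) :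
    c ≤ mr ^ (1 / (n:ℝ)) := by
  have := Real.rpow_le_rpow (by positivity) h (by positivity : (0:ℝ) ≤ 1/(n:ℝ))
  rwa [← Real.rpow_natCast c n, ← Real.rpow_mul hc, mul_one_div,
    div_self (by exact_mod_cast hn), Real.rpow_one] at this

lemma compl_bound {α : Type*} [MeasurableSpace α] (pp : MeasureTheory.Measure α)
    [MeasureTheory.IsProbabilityMeasure pp]
    {S : Set α} (hS : MeasurableSet S) {a : ℝ} (ha0 : 0 ≤ a) (ha1 : a ≤ 1)
    (h : ENNReal.ofReal (1 - a) ≤ pp S) : pp Sᶜ ≤ ENNReal.ofReal a := by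
  rw [prob_compl_eq_one_sub hS]
  have h1 : (1:ENNReal) = ENNReal.ofReal (1-a) + ENNReal.ofReal a := by
    rw [← ENNReal.ofReal_add (by linarith) ha0]; norm_num
  calc (1:ENNReal) - pp S ≤ 1 - ENNReal.ofReal (1-a) := tsub_le_tsub_left h 1
    _ = ENNReal.ofReal a := by rw [h1, ENNReal.add_sub_cancel_left ENNReal.ofReal_ne_top]

lemma key_bounds (k : ℕ) (hk : 1 ≤ k) (d : ℕ) (hd : 1 ≤ d)
    (ε δ : ℝ) (hε : IsPow2Inv ε) (hδ : IsPow2Inv δ)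
    (m : ℕ) (hm : ((4 * d : ℕ) : ℝ) ^ (3 * k) + (8 / (min ε δ) ^ 3) ^ k ≤ (m : ℝ))
    (rm : ℝ) (hrle : rm ≤ (m : ℝ) ^ (-(1 / (3 * (k : ℝ)))))
    (hrlow : (m : ℝ) ^ (-(1 / (3 * (k : ℝ)))) / 2 < rm) (hr0 : 0 < rm) :
    ((d:ℝ)/(rm * rm))^k ≤ (m:ℝ) ∧ rm ≤ min ε δ / 2 := by
  have hε0 := pow2inv_pos hε
  have hδ0 := pow2inv_pos hδ
  have hmin0 : 0 < min ε δ := lt_min hε0 hδ0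
  have hk0 : (0:ℝ) < (k:ℝ) := by exact_mod_cast hk
  have hd4 : (1:ℝ) ≤ ((4*d:ℕ):ℝ) := by
    have : (4:ℕ) ≤ 4*d := by omega
    calc (1:ℝ) ≤ ((4:ℕ):ℝ) := by norm_num
      _ ≤ ((4*d:ℕ):ℝ) := by exact_mod_cast this
  have h4d1 : (1:ℝ) ≤ ((4*d:ℕ):ℝ) ^ (3*k) := one_le_pow₀ hd4
  have hterm2 : (0:ℝ) < (8 / (min ε δ)^3)^k := by positivity
  have hmr1 : (1:ℝ) ≤ (m:ℝ) := by nlinarith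
  have hmr0 : (0:ℝ) < (m:ℝ) := by linarith
  have hmA : ((4*d:ℕ):ℝ)^(3*k) ≤ (m:ℝ) := by linarith
  have hmB : (8/(min ε δ)^3)^k ≤ (m:ℝ) := by linarith
  set x : ℝ := (m:ℝ) ^ (-(1 / (3 * (k:ℝ)))) with hxdef
  have hx0 : 0 < x := Real.rpow_pos_of_pos hmr0 _
  constructor
  · have hd0 : (0:ℝ) < d := by exact_mod_cast hd
    have hxx : x * x = (m:ℝ) ^ (-(2/(3*(k:ℝ)))) := by
      rw [hxdef, ← Real.rpow_add hmr0]; congr 1; ring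
    have hrr : (m:ℝ) ^ (-(2/(3*(k:ℝ)))) / 4 < rm * rm := by
      have h5 := mul_lt_mul'' hrlow hrlow (by positivity) (by positivity)
      nlinarith
    have hrrpos : (0:ℝ) < (m:ℝ) ^ (-(2/(3*(k:ℝ)))) / 4 := by positivity
    have hdiv : (d:ℝ)/(rm * rm) ≤ 4*(d:ℝ) * (m:ℝ)^(2/(3*(k:ℝ))) := by
      have h1 : (d:ℝ)/(rm * rm) ≤ (d:ℝ)/((m:ℝ)^(-(2/(3*(k:ℝ))))/4) :=
        div_le_div_of_nonneg_left hd0.le hrrpos hrr.le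
      have h2 : (d:ℝ)/((m:ℝ)^(-(2/(3*(k:ℝ))))/4) = 4*(d:ℝ)*(m:ℝ)^(2/(3*(k:ℝ))) := by
        rw [Real.rpow_neg hmr0.le]
        have hp : (0:ℝ) < (m:ℝ)^(2/(3*(k:ℝ))) := Real.rpow_pos_of_pos hmr0 _
        field_simp
      linarith
    calc ((d:ℝ)/(rm * rm))^k ≤ (4*(d:ℝ) * (m:ℝ)^(2/(3*(k:ℝ))))^k :=
          pow_le_pow_left₀ (by positivity) hdiv k
      _ = (4*(d:ℝ))^k * (m:ℝ)^((2:ℝ)/3) := by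
          have hkne : (k:ℝ) ≠ 0 := ne_of_gt hk0
          rw [mul_pow, ← Real.rpow_natCast ((m:ℝ)^(2/(3*(k:ℝ)))) k, ← Real.rpow_mul hmr0.le,
            show 2/(3*(k:ℝ)) * (k:ℝ) = 2/3 by field_simp]
      _ ≤ (m:ℝ)^((1:ℝ)/3) * (m:ℝ)^((2:ℝ)/3) := by
          have h3 : ((4*(d:ℝ))^k)^3 ≤ (m:ℝ) := by
            have he : ((4*(d:ℝ)))^(3*k) = ((4*(d:ℝ))^k)^3 := by rw [mul_comm 3 k, pow_mul]
            rw [← he]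
            calc (4*(d:ℝ))^(3*k) = ((4*d:ℕ):ℝ)^(3*k) := by push_cast; ring
              _ ≤ (m:ℝ) := hmA
          have h4 := rpow_root_le (n := 3) (by norm_num) (by positivity) h3
          norm_num at h4
          exact mul_le_mul_of_nonneg_right h4 (Real.rpow_nonneg hmr0.le _)
      _ = (m:ℝ) := by rw [← Real.rpow_add hmr0]; norm_num
  · refine le_trans hrle ?_
    have hc0 : (0:ℝ) < 2 / min ε δ := by positivity
    have h8 : (8/(min ε δ)^3)^k = (2/min ε δ)^(3*k) := by
      rw [pow_mul, show (2/min ε δ)^3 = 8/(min ε δ)^3 by rw [div_pow]; norm_num]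
    have hroot : 2/min ε δ ≤ (m:ℝ) ^ (1/((3*k:ℕ):ℝ)) := by
      refine rpow_root_le (by omega) hc0.le ?_
      rw [← h8]; exact hmB
    have hcast : ((3*k:ℕ):ℝ) = 3*(k:ℝ) := by push_cast; ring
    rw [hcast] at hroot
    have hxe : x = ((m:ℝ) ^ (1/(3*(k:ℝ))))⁻¹ := by
      rw [hxdef, ← Real.rpow_neg hmr0.le]
    rw [hxe]
    calc ((m:ℝ)^(1/(3*(k:ℝ))))⁻¹ ≤ (2/min ε δ)⁻¹ := inv_anti₀ hc0 hroot
      _ = min ε δ / 2 := by rw [inv_div]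


/-- Claim 2 of the paper: a Turing-optimal learner PAC-learns any
PAC-learnable class: if `P_{ε,δ}` PAC-learns `C_d` with sample requirement
`m ≥ (d/(εδ))^k`, `B` is the learner running `P_{r,r}` for `r` the largest power of two
`≤ m^{-1/(3k)}`, and `A` is a PAO learner for a finite family `𝒜 ∋ B` with sample
requirement `M ≥ (dm/(εδ))^{k'}`, then `A` PAC-learns `C_d`: for `ε, δ ∈ 2^{-ℕ}`,
`m ≥ (4d)^{3k} + (8/min(ε,δ)³)^k`, `M ≥ (4dm/(εδ))^{k'}`, and any distribution `D`
consistent with `C_d`, `A` outputs a classifier of error at most `ε` with probability at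
least `1 - δ`. -/
theorem statement10 (k : ℕ) (hk : 1 ≤ k) (d : ℕ) (hd : 1 ≤ d)
    (Cd : Set (Classifier d))
    (P : ℝ → ℝ → Learner d)
    (hP : ∀ ε δ : ℝ, IsPow2Inv ε → IsPow2Inv δ →
      ∀ m : ℕ, ((d : ℝ) / (ε * δ)) ^ k ≤ (m : ℝ) →
      ∀ (D : Measure (Example d)) [IsProbabilityMeasure D],
        (∃ c ∈ Cd, errD D c = 0) →
        ENNReal.ofReal (1 - δ) ≤
          (Measure.pi fun _ : Fin m => D)
            {Z | errD D (P ε δ (List.ofFn Z)) ≤ ε})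
    (r : ℕ → ℝ)
    (hr : ∀ m : ℕ, 1 ≤ m →
      IsGreatest {q : ℝ | IsPow2Inv q ∧ q ≤ (m : ℝ) ^ (-(1 / (3 * (k : ℝ))))} (r m))
    (B : Learner d)
    (hB : ∀ Z : List (Example d), B Z = P (r Z.length) (r Z.length) Z)
    (𝒜 : Finset (Learner d)) (hB𝒜 : B ∈ 𝒜)
    (A : Learner d) (k' : ℕ) (hk' : 1 ≤ k')
    (hA : ∀ ε δ : ℝ, IsPow2Inv ε → IsPow2Inv δ →
      ∀ m : ℕ, 1 ≤ m →
      ∀ (D : Measure (Example d)) [IsProbabilityMeasure D],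
      ∀ M : ℕ, (((d * m : ℕ) : ℝ) / (ε * δ)) ^ k' ≤ (M : ℝ) →
        ENNReal.ofReal (1 - δ) ≤
          ((Measure.pi fun _ : Fin m => D).prod (Measure.pi fun _ : Fin M => D))
            {p | errD D (A (List.ofFn p.1 ++ List.ofFn p.2)) ≤
              𝒜.inf' ⟨B, hB𝒜⟩ (fun B' => errD D (B' (List.ofFn p.1))) + ε}) :
    ∀ ε δ : ℝ, IsPow2Inv ε → IsPow2Inv δ →
    ∀ m : ℕ, ((4 * d : ℕ) : ℝ) ^ (3 * k) + (8 / (min ε δ) ^ 3) ^ k ≤ (m : ℝ) →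
    ∀ M : ℕ, (((4 * d * m : ℕ) : ℝ) / (ε * δ)) ^ k' ≤ (M : ℝ) →
    ∀ (D : Measure (Example d)) [IsProbabilityMeasure D],
      (∃ c ∈ Cd, errD D c = 0) →
      ENNReal.ofReal (1 - δ) ≤
        ((Measure.pi fun _ : Fin m => D).prod (Measure.pi fun _ : Fin M => D))
          {p | errD D (A (List.ofFn p.1 ++ List.ofFn p.2)) ≤ ε} := by
  intro ε δ hε hδ m hm M hM D _ hcons
  have hε0 := pow2inv_pos hε
  have hδ0 := pow2inv_pos hδ
  have hε1 := pow2inv_le_one hε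
  have hδ1 := pow2inv_le_one hδ
  have hmin0 : 0 < min ε δ := lt_min hε0 hδ0
  -- m ≥ 1
  have hd4 : (1:ℝ) ≤ ((4*d:ℕ):ℝ) := by
    have : (4:ℕ) ≤ 4*d := by omega
    calc (1:ℝ) ≤ ((4:ℕ):ℝ) := by norm_num
      _ ≤ ((4*d:ℕ):ℝ) := by exact_mod_cast this
  have h4d1 : (1:ℝ) ≤ ((4*d:ℕ):ℝ) ^ (3*k) := one_le_pow₀ hd4
  have hterm2 : (0:ℝ) < (8 / (min ε δ)^3)^k := by positivity
  have hmr1 : (1:ℝ) ≤ (m:ℝ) := by nlinarith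
  have hmr0 : (0:ℝ) < (m:ℝ) := by linarith
  have hm1 : 1 ≤ m := by exact_mod_cast hmr1
  -- properties of r m
  obtain ⟨⟨hrP2, hrle⟩, hrub⟩ := hr m hm1
  have hx0 : 0 < (m:ℝ) ^ (-(1 / (3 * (k:ℝ)))) := Real.rpow_pos_of_pos hmr0 _
  have hx1 : (m:ℝ) ^ (-(1 / (3 * (k:ℝ)))) ≤ 1 :=
    Real.rpow_le_one_of_one_le_of_nonpos hmr1 (neg_nonpos.2 (by positivity))
  obtain ⟨q, hq2, hqx, hqhalf⟩ := exists_pow2_half hx0 hx1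
  have hrlow : (m:ℝ) ^ (-(1 / (3 * (k:ℝ)))) / 2 < r m :=
    lt_of_lt_of_le hqhalf (hrub ⟨hq2, hqx⟩)
  have hr0 : 0 < r m := pow2inv_pos hrP2
  obtain ⟨hPc, hrmin⟩ := key_bounds k hk d hd ε δ hε hδ m hm (r m) hrle hrlow hr0
  have hrε : r m ≤ ε / 2 := le_trans hrmin (by have := min_le_left ε δ; linarith)
  have hrδ : r m ≤ δ / 2 := le_trans hrmin (by have := min_le_right ε δ; linarith)
  -- apply hP at (r m, r m)
  have hPapp := hP (r m) (r m) hrP2 hrP2 m hPc D hcons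
  -- apply hA at (ε/2, δ/2)
  have hMA : (((d*m:ℕ):ℝ)/((ε/2)*(δ/2)))^k' ≤ (M:ℝ) := by
    have heq : (((d*m:ℕ):ℝ)/((ε/2)*(δ/2))) = (((4*d*m:ℕ):ℝ)/(ε*δ)) := by
      push_cast
      field_simp
      ring
    rw [heq]; exact hM
  have hAapp := hA (ε/2) (δ/2) (pow2inv_half hε) (pow2inv_half hδ) m hm1 D M hMA
  -- the measure-theoretic union bound
  set π := ((Measure.pi fun _ : Fin m => D).prod (Measure.pi fun _ : Fin M => D)) with hπ
  set S1 : Set ((Fin m → Example d) × (Fin M → Example d)) :=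
    {p | errD D (A (List.ofFn p.1 ++ List.ofFn p.2)) ≤
      𝒜.inf' ⟨B, hB𝒜⟩ (fun B' => errD D (B' (List.ofFn p.1))) + ε/2} with hS1
  set S2 : Set (Fin m → Example d) :=
    {Z | errD D (P (r m) (r m) (List.ofFn Z)) ≤ r m} with hS2
  set T : Set ((Fin m → Example d) × (Fin M → Example d)) :=
    {p | errD D (A (List.ofFn p.1 ++ List.ofFn p.2)) ≤ ε} with hT
  have hsub : S1 ∩ (Prod.fst ⁻¹' S2) ⊆ T := by
    rintro p ⟨h1, h2⟩
    simp only [hS1, hS2, hT, Set.mem_setOf_eq, Set.mem_preimage] at h1 h2 ⊢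
    have hBp : 𝒜.inf' ⟨B, hB𝒜⟩ (fun B' => errD D (B' (List.ofFn p.1))) ≤
        errD D (B (List.ofFn p.1)) := Finset.inf'_le _ hB𝒜
    have hBeq : B (List.ofFn p.1) = P (r m) (r m) (List.ofFn p.1) := by
      rw [hB (List.ofFn p.1), List.length_ofFn]
    rw [hBeq] at hBp
    linarith
  have measS1 : MeasurableSet S1 := (Set.to_countable S1).measurableSet
  have measS2f : MeasurableSet (Prod.fst ⁻¹' S2 :
      Set ((Fin m → Example d) × (Fin M → Example d))) :=
    (Set.to_countable _).measurableSet
  have measT : MeasurableSet T := (Set.to_countable T).measurableSet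
  have hπS2 : ENNReal.ofReal (1 - r m) ≤ π (Prod.fst ⁻¹' S2) := by
    rw [hπ, ← Set.prod_univ, Measure.prod_prod, measure_univ, mul_one]
    exact hPapp
  have h1c : π S1ᶜ ≤ ENNReal.ofReal (δ/2) :=
    compl_bound π measS1 (by linarith) (by linarith) hAapp
  have h2c : π (Prod.fst ⁻¹' S2)ᶜ ≤ ENNReal.ofReal (δ/2) := by
    refine le_trans (compl_bound π measS2f hr0.le (by linarith) hπS2) ?_
    exact ENNReal.ofReal_le_ofReal hrδ
  have hTc : π Tᶜ ≤ ENNReal.ofReal δ := by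
    calc π Tᶜ ≤ π (S1ᶜ ∪ (Prod.fst ⁻¹' S2)ᶜ) := by
          apply measure_mono
          rw [← Set.compl_inter]
          exact Set.compl_subset_compl.2 hsub
      _ ≤ π S1ᶜ + π (Prod.fst ⁻¹' S2)ᶜ := measure_union_le _ _
      _ ≤ ENNReal.ofReal (δ/2) + ENNReal.ofReal (δ/2) := add_le_add h1c h2c
      _ = ENNReal.ofReal δ := by
          rw [← ENNReal.ofReal_add (by linarith) (by linarith)]; norm_num
  have hsum : π T + π Tᶜ = 1 := by rw [measure_add_measure_compl measT, measure_univ]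
  have hor : ENNReal.ofReal (1 - δ) = 1 - ENNReal.ofReal δ := by
    rw [ENNReal.ofReal_sub _ hδ0.le, ENNReal.ofReal_one]
  rw [hor, tsub_le_iff_right]
  calc (1:ENNReal) = π T + π Tᶜ := hsum.symm
    _ ≤ π T + ENNReal.ofReal δ := add_le_add (le_refl _) hTc
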